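/- Let s₁ > 0, A₁ > 0, and let ρ be a Borel measure on (0,∞) with ∫ dρ(s)/(1+s) < ∞. Define v(x) = ∫₀^∞ dρ(s)/(x+s) − A₁/(x+s₁) for x > 0. Assume that the integral ∫₀^∞ v(x)·x^{−1/2} dx exists and is strictly positive. Then there exist extended real numbers 0 ≤ x₁ ≤ x₂ ≤ +∞ such that v(x) ≥ 0 for all x ∈ (0,x₁) ∪ (x₂,∞) and v(x) ≤ 0 for all x ∈ (x₁,x₂). -/

import Mathlib

open MeasureTheory
open scoped ENNReal

theorem sign_pattern_of_v
    (s₁ A₁ : ℝ) (hs₁ : 0 < s₁) (hA₁ : 0 < A₁)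
    (ρ : Measure ℝ) (hρsupp : ρ (Set.Iic 0) = 0)
    (hρint : Integrable (fun s => 1 / (1 + s)) ρ)
    (v : ℝ → ℝ)
    (hv : ∀ x, 0 < x → v x = (∫ s, 1 / (x + s) ∂ρ) - A₁ / (x + s₁))
    (hint : IntegrableOn (fun x => v x / Real.sqrt x) (Set.Ioi 0))
    (hpos : 0 < ∫ x in Set.Ioi 0, v x / Real.sqrt x) :
    ∃ x₁ x₂ : ℝ≥0∞, x₁ ≤ x₂ ∧
      (∀ x : ℝ, 0 < x → ENNReal.ofReal x < x₁ → 0 ≤ v x) ∧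
      (∀ x : ℝ, x₂ < ENNReal.ofReal x → 0 ≤ v x) ∧
      (∀ x : ℝ, x₁ < ENNReal.ofReal x → ENNReal.ofReal x < x₂ → v x ≤ 0) := by
  have h0 : ∀ᵐ s ∂ρ, 0 < s := by
    rw [ae_iff]
    have hset : {s : ℝ | ¬ 0 < s} = Set.Iic 0 := by ext s; simp [not_lt]
    rw [hset]; exact hρsupp
  -- integrability of 1/(x+s)
  have int1 : ∀ x : ℝ, 0 < x → Integrable (fun s => 1 / (x + s)) ρ := by
    intro x hx
    apply (hρint.const_mul (max 1 x⁻¹)).mono'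
    · exact ((measurable_const.div ((measurable_const.add measurable_id) :
        Measurable fun s : ℝ => x + s))).aestronglyMeasurable
    · filter_upwards [h0] with s hs
      have hxs : 0 < x + s := by linarith
      have h1s : 0 < 1 + s := by linarith
      rw [Real.norm_eq_abs, abs_of_pos (by positivity)]
      rw [mul_one_div, div_le_div_iff₀ hxs h1s]
      have hM1 : (1:ℝ) ≤ max 1 x⁻¹ := le_max_left _ _
      have hMx : x⁻¹ ≤ max 1 x⁻¹ := le_max_right _ _
      have h1 : x⁻¹ * x ≤ max 1 x⁻¹ * x := mul_le_mul_of_nonneg_right hMx hx.le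
      have h2 : x⁻¹ * x = 1 := inv_mul_cancel₀ hx.ne'
      have h3 : 1 * s ≤ max 1 x⁻¹ * s := mul_le_mul_of_nonneg_right hM1 hs.le
      nlinarith
  -- integrability of (s - s₁)/((a+s)(b+s))
  have int2 : ∀ a b : ℝ, 0 < a → 0 < b →
      Integrable (fun s => (s - s₁) / ((a + s) * (b + s))) ρ := by
    intro a b ha hb
    apply (hρint.const_mul ((1 + s₁) / (min a 1 * min b 1))).mono'
    · exact ((measurable_id.sub measurable_const).div
        ((measurable_const.add measurable_id).mul
          (measurable_const.add measurable_id))).aestronglyMeasurable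
    · filter_upwards [h0] with s hs
      have has : 0 < a + s := by linarith
      have hbs : 0 < b + s := by linarith
      have h1s : 0 < 1 + s := by linarith
      have hma : 0 < min a 1 := lt_min ha one_pos
      have hmb : 0 < min b 1 := lt_min hb one_pos
      have ha' : min a 1 * (1 + s) ≤ a + s := by
        rcases le_total a 1 with h | h
        · rw [min_eq_left h]; nlinarith
        · rw [min_eq_right h]; nlinarith
      have hb' : min b 1 * (1 + s) ≤ b + s := by
        rcases le_total b 1 with h | h
        · rw [min_eq_left h]; nlinarith
        · rw [min_eq_right h]; nlinarith
      have h1 : |s - s₁| ≤ (1 + s₁) * (1 + s) := by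
        rw [abs_le]; constructor <;> nlinarith
      have hdpos : 0 < min a 1 * min b 1 * ((1 + s) * (1 + s)) := by positivity
      have h2 : min a 1 * min b 1 * ((1 + s) * (1 + s)) ≤ (a + s) * (b + s) := by
        nlinarith [mul_le_mul ha' hb' (by positivity : (0:ℝ) ≤ min b 1 * (1 + s)) has.le]
      rw [Real.norm_eq_abs, abs_div, abs_of_pos (by positivity : (0:ℝ) < (a+s)*(b+s))]
      calc |s - s₁| / ((a + s) * (b + s))
          ≤ ((1 + s₁) * (1 + s)) / (min a 1 * min b 1 * ((1 + s) * (1 + s))) :=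
            div_le_div₀ (by positivity) h1 hdpos h2
        _ = (1 + s₁) / (min a 1 * min b 1) * (1 / (1 + s)) := by
            field_simp
  -- the key difference identity
  have gdiff : ∀ a b : ℝ, 0 < a → 0 < b →
      (b + s₁) * (∫ s, 1 / (b + s) ∂ρ) - (a + s₁) * (∫ s, 1 / (a + s) ∂ρ)
        = (b - a) * ∫ s, (s - s₁) / ((a + s) * (b + s)) ∂ρ := by
    intro a b ha hb
    rw [← integral_const_mul, ← integral_const_mul, ← integral_const_mul,
        ← integral_sub ((int1 b hb).const_mul _) ((int1 a ha).const_mul _)]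
    apply integral_congr_ae
    filter_upwards [h0] with s hs
    have has : (a + s) ≠ 0 := by positivity
    have hbs : (b + s) ≠ 0 := by positivity
    field_simp
    ring
  -- comparison: the difference integrals, once positive, stay positive
  have comp : ∀ a b c : ℝ, 0 < a → a < b → b < c →
      (a + s₁) / (c + s₁) * ∫ s, (s - s₁) / ((a + s) * (b + s)) ∂ρ
        ≤ ∫ s, (s - s₁) / ((b + s) * (c + s)) ∂ρ := by
    intro a b c ha hab hbc
    have hb : 0 < b := ha.trans hab
    have hc : 0 < c := hb.trans hbc
    set K : ℝ := (a + s₁) / (c + s₁) with hK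
    have hnn : 0 ≤ ∫ s, ((s - s₁) / ((b + s) * (c + s))
        - K * ((s - s₁) / ((a + s) * (b + s)))) ∂ρ := by
      apply integral_nonneg_of_ae
      filter_upwards [h0] with s hs
      have has : 0 < a + s := by linarith
      have hbs : 0 < b + s := by linarith
      have hcs : 0 < c + s := by linarith
      have hcs₁ : 0 < c + s₁ := by linarith
      have heq : (s - s₁) / ((b + s) * (c + s)) - K * ((s - s₁) / ((a + s) * (b + s)))
          = ((c - a) * (s - s₁) ^ 2) / ((a + s) * (b + s) * (c + s) * (c + s₁)) := by
        rw [hK]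
        field_simp
        ring
      rw [heq]
      apply div_nonneg (mul_nonneg (by linarith) (sq_nonneg _)) (by positivity)
    rw [integral_sub (int2 b c hb hc) ((int2 a b ha hb).const_mul K),
        integral_const_mul] at hnn
    linarith
  -- key: order-convexity of the negativity set
  have key : ∀ a b c : ℝ, 0 < a → a < b → b < c → v a < 0 → v c < 0 → v b < 0 := by
    intro a b c ha hab hbc hva hvc
    by_contra hvb
    push_neg at hvb
    have hb : 0 < b := ha.trans hab
    have hc : 0 < c := hb.trans hbc
    have has₁ : 0 < a + s₁ := by linarith
    have hbs₁ : 0 < b + s₁ := by linarith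
    have hcs₁ : 0 < c + s₁ := by linarith
    -- g x := (x+s₁) * (∫ 1/(x+s)) - A₁ = (x+s₁) * v x
    have hg : ∀ x : ℝ, 0 < x → (x + s₁) * (∫ s, 1 / (x + s) ∂ρ) - A₁ = (x + s₁) * v x := by
      intro x hx
      rw [hv x hx]
      have : (x + s₁) ≠ 0 := by positivity
      field_simp
    have hga : (a + s₁) * v a < 0 := mul_neg_of_pos_of_neg has₁ hva
    have hgb : 0 ≤ (b + s₁) * v b := mul_nonneg hbs₁.le hvb
    have hgc : (c + s₁) * v c < 0 := mul_neg_of_pos_of_neg hcs₁ hvc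
    have hdab : (b + s₁) * v b - (a + s₁) * v a
        = (b - a) * ∫ s, (s - s₁) / ((a + s) * (b + s)) ∂ρ := by
      rw [← hg a ha, ← hg b hb]
      have := gdiff a b ha hb
      linarith
    have hdbc : (c + s₁) * v c - (b + s₁) * v b
        = (c - b) * ∫ s, (s - s₁) / ((b + s) * (c + s)) ∂ρ := by
      rw [← hg b hb, ← hg c hc]
      have := gdiff b c hb hc
      linarith
    have hΦab : 0 < ∫ s, (s - s₁) / ((a + s) * (b + s)) ∂ρ := by
      have h1 : 0 < (b - a) * ∫ s, (s - s₁) / ((a + s) * (b + s)) ∂ρ := by linarith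
      have h2 : 0 < b - a := by linarith
      nlinarith [h1, h2]
    have hΦbc : 0 < ∫ s, (s - s₁) / ((b + s) * (c + s)) ∂ρ := by
      have hKpos : 0 < (a + s₁) / (c + s₁) := by positivity
      calc (0:ℝ) < (a + s₁) / (c + s₁) * ∫ s, (s - s₁) / ((a + s) * (b + s)) ∂ρ :=
            mul_pos hKpos hΦab
        _ ≤ _ := comp a b c ha hab hbc
    have : 0 < (c + s₁) * v c := by
      have h2 : 0 < c - b := by linarith
      nlinarith
    linarith
  -- assemble
  set N : Set ℝ := {x | 0 < x ∧ v x < 0} with hN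
  by_cases hNe : N.Nonempty
  · refine ⟨sInf (ENNReal.ofReal '' N), sSup (ENNReal.ofReal '' N),
      sInf_le_sSup (hNe.image _), ?_, ?_, ?_⟩
    · intro x hx hlt
      by_contra hvx
      push_neg at hvx
      have hxN : x ∈ N := ⟨hx, hvx⟩
      exact absurd (sInf_le (Set.mem_image_of_mem _ hxN)) (not_le_of_gt hlt)
    · intro x hlt
      by_contra hvx
      push_neg at hvx
      have hx : 0 < x := by
        by_contra hx
        push_neg at hx
        rw [ENNReal.ofReal_eq_zero.mpr hx] at hlt
        exact (not_lt_of_ge zero_le) hlt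
      have hxN : x ∈ N := ⟨hx, hvx⟩
      exact absurd (le_sSup (Set.mem_image_of_mem _ hxN)) (not_le_of_gt hlt)
    · intro x h1 h2
      obtain ⟨a', ha'mem, ha'lt⟩ := sInf_lt_iff.mp h1
      obtain ⟨a, haN, rfl⟩ := ha'mem
      obtain ⟨c', hc'mem, hc'lt⟩ := lt_sSup_iff.mp h2
      obtain ⟨c, hcN, rfl⟩ := hc'mem
      have ha : 0 < a := haN.1
      have hc : 0 < c := hcN.1
      have hx : 0 < x := by
        have hpos' : (0:ℝ≥0∞) < ENNReal.ofReal x :=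
          (ENNReal.ofReal_pos.mpr ha).trans ha'lt
        exact ENNReal.ofReal_pos.mp hpos'
      have hax : a < x := by
        rwa [ENNReal.ofReal_lt_ofReal_iff hx] at ha'lt
      have hxc : x < c := by
        rwa [ENNReal.ofReal_lt_ofReal_iff hc] at hc'lt
      exact (key a x c ha hax hxc haN.2 hcN.2).le
  · refine ⟨0, 0, le_refl _, ?_, ?_, ?_⟩
    · intro x hx hlt
      exact absurd hlt (not_lt_of_ge zero_le)
    · intro x hlt
      have hx : 0 < x := ENNReal.ofReal_pos.mp hlt
      by_contra hvx
      push_neg at hvx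
      exact hNe ⟨x, hx, hvx⟩
    · intro x h1 h2
      exact absurd h2 (not_lt_of_ge zero_le)
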